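/- Let (Ω, 𝔉, P) be a probability space, let 𝔉_0 ⊆ 𝔉_1 ⊆ ... ⊆ 𝔉_m ⊆ 𝔉 be sub-σ-algebras, let s ∈ ℝ, and let Y_1, ..., Y_m and S_0, S_1, ..., S_m be integrable real random variables with S_0 = s almost surely and each S_{k-1} being 𝔉_{k-1}-measurable. If the periodic fairness condition E[Y_k + S_k | 𝔉_{k-1}] = S_{k-1} holds almost surely for every k = 1, ..., m, then E[Σ_{k=1}^m Y_k + S_m] = s. -/

import Mathlib

open MeasureTheory Finset

/-- Periodic fairness implies lifetime fairness: if in each period the conditional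
expectation of payments plus end-of-period cash value equals the beginning-of-period
cash value, then expected total discounted payments plus terminal cash value equal the
initial investment. -/
theorem stmt_7 {Ω : Type*} {m0 : MeasurableSpace Ω} (μ : Measure Ω)
    [IsProbabilityMeasure μ]
    (m : ℕ) (𝔉 : ℕ → MeasurableSpace Ω)
    (h_le : ∀ k, k ≤ m → 𝔉 k ≤ m0)
    (h_mono : ∀ k, k < m → 𝔉 k ≤ 𝔉 (k + 1))
    (s : ℝ) (Y S : ℕ → Ω → ℝ)
    (hY_int : ∀ k, 1 ≤ k → k ≤ m → Integrable (Y k) μ)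
    (hS_int : ∀ k, k ≤ m → Integrable (S k) μ)
    (hS0 : ∀ᵐ ω ∂μ, S 0 ω = s)
    (hS_meas : ∀ k, k < m → StronglyMeasurable[𝔉 k] (S k))
    (hfair : ∀ k, 1 ≤ k → k ≤ m →
      μ[fun ω => Y k ω + S k ω | 𝔉 (k - 1)] =ᵐ[μ] S (k - 1)) :
    ∫ ω, ((∑ k ∈ Finset.Icc 1 m, Y k ω) + S m ω) ∂μ = s := by
  have key : ∀ n, n ≤ m → ∫ ω, ((∑ k ∈ Finset.Icc 1 n, Y k ω) + S n ω) ∂μ = s := by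
    intro n
    induction n with
    | zero =>
      intro _
      simp only [Finset.Icc_eq_empty_of_lt Nat.zero_lt_one, Finset.sum_empty, zero_add]
      rw [integral_congr_ae hS0]
      simp
    | succ n ih =>
      intro hn
      have hn' : n ≤ m := Nat.le_of_succ_le hn
      have h1 : 1 ≤ n + 1 := Nat.succ_le_succ (Nat.zero_le n)
      have hYint : Integrable (Y (n + 1)) μ := hY_int _ h1 hn
      have hSint : Integrable (S (n + 1)) μ := hS_int _ hn
      have hSumint : Integrable (fun ω => ∑ k ∈ Finset.Icc 1 n, Y k ω) μ :=
        integrable_finset_sum _ fun k hk => hY_int k (Finset.mem_Icc.mp hk).1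
          (le_trans (Finset.mem_Icc.mp hk).2 hn')
      have hE : ∫ ω, (Y (n + 1) ω + S (n + 1) ω) ∂μ = ∫ ω, S n ω ∂μ := by
        have hfair' := hfair (n + 1) h1 hn
        simp only [Nat.add_sub_cancel] at hfair'
        rw [← integral_congr_ae hfair',
          integral_condExp (h_le n hn')]
      have hsplit : ∫ ω, ((∑ k ∈ Finset.Icc 1 (n + 1), Y k ω) + S (n + 1) ω) ∂μ
          = (∫ ω, ((∑ k ∈ Finset.Icc 1 n, Y k ω) + S n ω) ∂μ)
            - (∫ ω, S n ω ∂μ) + ∫ ω, (Y (n + 1) ω + S (n + 1) ω) ∂μ := by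
        have hSnint : Integrable (S n) μ := hS_int n hn'
        have hpt : (fun ω => (∑ k ∈ Finset.Icc 1 (n + 1), Y k ω) + S (n + 1) ω)
            = fun ω => (∑ k ∈ Finset.Icc 1 n, Y k ω) + (Y (n + 1) ω + S (n + 1) ω) := by
          funext ω
          rw [Finset.sum_Icc_succ_top h1]
          ring
        have hYS : Integrable (fun ω => Y (n + 1) ω + S (n + 1) ω) μ := hYint.add hSint
        rw [show (∫ ω, ((∑ k ∈ Finset.Icc 1 (n + 1), Y k ω) + S (n + 1) ω) ∂μ)
            = ∫ ω, ((∑ k ∈ Finset.Icc 1 n, Y k ω) + (Y (n + 1) ω + S (n + 1) ω)) ∂μ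
            from by rw [hpt],
          integral_add hSumint hYS, integral_add hSumint hSnint]
        ring
      rw [hsplit, hE, ih hn']
      ring
  exact key m le_rfl
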